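/- Let m ≥ 1 be an integer, δ ∈ ℂ with 0 ≤ Re δ, and let μ^{(m)} be the measure (1-|z|²)^{m-1} dσ(z) on the unit disc 𝔻. Then the constant function 1 lies in the closure, in L²(𝔻, μ^{(m)}), of the linear span of the functions z ↦ (1-z)^δ z^k for k = 0, 1, 2, …. -/

import Mathlib

open MeasureTheory Metric Complex Real Filter Topology

lemma aux_ne_zero {w : ℂ} (hw : 0 < w.re) : w ≠ 0 := by
  intro h; rw [h] at hw; simp at hw


lemma aux_abs_cpow_mul_le (δ : ℂ) (hδ : 0 ≤ δ.re) {a b : ℂ} (ha : a ≠ 0) (hb : b ≠ 0)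
    (hra : 0 ≤ a.re) (hrb : 0 ≤ b.re) (hab : ‖a‖ ≤ 2 * ‖b‖) :
    ‖a ^ δ * b ^ (-δ)‖ ≤ 2 ^ δ.re * Real.exp (Real.pi * |δ.im|) := by
  have hB : 0 < ‖b‖ := norm_pos_iff.mpr hb
  have hA : 0 ≤ ‖a‖ := norm_nonneg a
  rw [norm_mul, Complex.norm_cpow_of_ne_zero ha, Complex.norm_cpow_of_ne_zero hb]
  have hre : (-δ).re = -δ.re := by simp
  have him : (-δ).im = -δ.im := by simp
  rw [hre, him, Real.rpow_neg hB.le]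
  have key : ‖a‖ ^ δ.re / Real.exp (a.arg * δ.im) *
      ((‖b‖ ^ δ.re)⁻¹ / Real.exp (b.arg * -δ.im)) =
      (‖a‖ / ‖b‖) ^ δ.re * Real.exp (-(a.arg * δ.im + b.arg * -δ.im)) := by
    rw [Real.div_rpow hA hB.le, Real.exp_neg, Real.exp_add]
    field_simp
  rw [key]
  have h1 : (‖a‖ / ‖b‖) ^ δ.re ≤ 2 ^ δ.re := by
    apply Real.rpow_le_rpow (by positivity) _ hδ
    rw [div_le_iff₀ hB]; linarith
  have h2 : Real.exp (-(a.arg * δ.im + b.arg * -δ.im)) ≤ Real.exp (Real.pi * |δ.im|) := by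
    apply Real.exp_le_exp.2
    have haa : |a.arg| ≤ Real.pi / 2 := Complex.abs_arg_le_pi_div_two_iff.2 hra
    have hbb : |b.arg| ≤ Real.pi / 2 := Complex.abs_arg_le_pi_div_two_iff.2 hrb
    have : |a.arg * δ.im| + |b.arg * -δ.im| ≤ Real.pi * |δ.im| := by
      rw [abs_mul, abs_mul, abs_neg]
      nlinarith [abs_nonneg δ.im, abs_nonneg a.arg, abs_nonneg b.arg]
    calc -(a.arg * δ.im + b.arg * -δ.im) ≤ |a.arg * δ.im| + |b.arg * -δ.im| := by
          have := neg_abs_le (a.arg * δ.im); have := neg_abs_le (b.arg * -δ.im); linarith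
      _ ≤ _ := this
  calc (‖a‖ / ‖b‖) ^ δ.re * Real.exp (-(a.arg * δ.im + b.arg * -δ.im))
      ≤ 2 ^ δ.re * Real.exp (Real.pi * |δ.im|) := by
        apply mul_le_mul h1 h2 (Real.exp_nonneg _) (by positivity)


lemma aux_re_pos {z : ℂ} (hz : ‖z‖ < 1) {r : ℝ} (hr0 : 0 ≤ r) (hr1 : r ≤ 1) :
    0 < (1 - (r:ℂ) * z).re := by
  have h1 : ((r:ℂ) * z).re = r * z.re := by simp [Complex.mul_re]
  have h2 : r * z.re ≤ r * ‖z‖ :=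
    mul_le_mul_of_nonneg_left (Complex.re_le_norm z) hr0
  have h3 : r * ‖z‖ ≤ 1 * ‖z‖ :=
    mul_le_mul_of_nonneg_right hr1 (norm_nonneg z)
  simp only [Complex.sub_re, Complex.one_re, h1]
  nlinarith

lemma aux_abs_le {z : ℂ} (hz : ‖z‖ < 1) {r : ℝ} (hr0 : 0 ≤ r) (hr1 : r ≤ 1) :
    ‖1 - z‖ ≤ 2 * ‖1 - (r:ℂ) * z‖ := by
  have hb : 1 - r ≤ ‖1 - (r:ℂ) * z‖ := by
    have := Complex.re_le_norm (1 - (r:ℂ) * z)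
    have h1 : ((r:ℂ) * z).re = r * z.re := by simp [Complex.mul_re]
    have h2 : r * z.re ≤ r * ‖z‖ :=
      mul_le_mul_of_nonneg_left (Complex.re_le_norm z) hr0
    have h3 : r * ‖z‖ ≤ r := by nlinarith
    simp only [Complex.sub_re, Complex.one_re, h1] at this
    linarith
  have key : (1:ℂ) - z = (1 - (r:ℂ) * z) - (1 - (r:ℂ)) * z := by ring
  calc ‖1 - z‖ ≤ ‖1 - (r:ℂ) * z‖ + ‖(1 - (r:ℂ)) * z‖ := by
        rw [key, sub_eq_add_neg]
        refine le_trans (norm_add_le _ _) ?_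
        simp
    _ ≤ 2 * ‖1 - (r:ℂ) * z‖ := by
        rw [norm_mul]
        have h4 : ‖1 - (r:ℂ)‖ = 1 - r := by
          rw [show (1:ℂ) - (r:ℂ) = ((1 - r : ℝ) : ℂ) by push_cast; ring,
            Complex.norm_real]
          exact abs_of_nonneg (by linarith)
        have h5 : ‖1 - (r:ℂ)‖ * ‖z‖ ≤ 1 - r := by
          rw [h4]; nlinarith [norm_nonneg z]
        linarith




lemma aux_cont1 (e : ℂ) {r : ℝ} (hr0 : 0 ≤ r) (hr1 : r ≤ 1) :
    ContinuousOn (fun z : ℂ => (1 - (r:ℂ) * z) ^ e) (ball (0:ℂ) 1) := by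
  intro z hz
  have hz' : ‖z‖ < 1 := by simpa [mem_ball_zero_iff] using hz
  apply ContinuousAt.continuousWithinAt
  exact ContinuousAt.cpow (by fun_prop) continuousAt_const (Or.inl (aux_re_pos hz' hr0 hr1))

lemma aux_cont2 (e : ℂ) : ContinuousOn (fun z : ℂ => (1 - z) ^ e) (ball (0:ℂ) 1) := by
  intro z hz
  have hz' : ‖z‖ < 1 := by simpa [mem_ball_zero_iff] using hz
  have h1 : 0 < (1 - z).re := by
    have := aux_re_pos hz' zero_le_one le_rfl
    simpa using this
  apply ContinuousAt.continuousWithinAt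
  exact ContinuousAt.cpow (by fun_prop) continuousAt_const (Or.inl h1)

lemma aux_tendsto (δ : ℂ) {z : ℂ} (hz : ‖z‖ < 1) :
    Tendsto (fun n : ℕ => (1 - z) ^ δ * (1 - (((1 - 1/(n+1) : ℝ)):ℂ) * z) ^ (-δ))
      atTop (𝓝 1) := by
  have h1 : 0 < (1 - z).re := by simpa using aux_re_pos hz zero_le_one le_rfl
  have h1z : (1 : ℂ) - z ≠ 0 := fun h => by rw [h] at h1; simp at h1
  have hr : Tendsto (fun n : ℕ => (1 - 1/(n+1) : ℝ)) atTop (𝓝 1) := by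
    have h : Tendsto (fun n : ℕ => 1 / ((n:ℝ) + 1)) atTop (𝓝 0) := tendsto_one_div_add_atTop_nhds_zero_nat
    have := (tendsto_const_nhds : Tendsto (fun _ : ℕ => (1:ℝ)) atTop (𝓝 1)).sub h
    simpa using this
  have hbase : Tendsto (fun n : ℕ => (1 : ℂ) - (((1 - 1/(n+1) : ℝ)):ℂ) * z) atTop (𝓝 (1 - z)) := by
    have h2 : Tendsto (fun n : ℕ => (((1 - 1/(n+1) : ℝ)):ℂ)) atTop (𝓝 1) := by
      have h3 := (Complex.continuous_ofReal.tendsto 1).comp hr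
      exact h3
    have := (tendsto_const_nhds : Tendsto (fun _ : ℕ => (1:ℂ)) atTop (𝓝 1)).sub (h2.mul_const z)
    simpa using this
  have hcpow : Tendsto (fun n : ℕ => ((1 : ℂ) - (((1 - 1/(n+1) : ℝ)):ℂ) * z) ^ (-δ))
      atTop (𝓝 ((1 - z) ^ (-δ))) :=
    (continuousAt_cpow_const (Or.inl h1)).tendsto.comp hbase
  have := (tendsto_const_nhds : Tendsto (fun _ : ℕ => (1 - z) ^ δ) atTop (𝓝 ((1 - z) ^ δ))).mul hcpow
  have hone : (1 - z) ^ δ * (1 - z) ^ (-δ) = 1 := by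
    rw [Complex.cpow_neg]
    apply mul_inv_cancel₀
    simp [Complex.cpow_eq_zero_iff, h1z]
  rw [hone] at this
  exact this

set_option maxHeartbeats 1000000 in
theorem one_mem_closure_span_nonneg (m : ℕ) (hm : 1 ≤ m) (δ : ℂ) (hδ : 0 ≤ δ.re) :
    ∀ ε > (0:ℝ), ∃ c : ℕ →₀ ℂ,
      ∫ z in Metric.ball (0:ℂ) 1,
        ‖(∑ k ∈ c.support, c k * (1 - z) ^ δ * z ^ k) - 1‖ ^ 2 *
          (1 - ‖z‖ ^ 2) ^ (m - 1) < ε := by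
  intro ε hε
  set C : ℝ := 2 ^ δ.re * Real.exp (Real.pi * |δ.im|) with hCdef
  have hCpos : 0 < C := by rw [hCdef]; positivity
  have hr0 : ∀ n : ℕ, 0 ≤ (1 - 1/(n+1) : ℝ) := by
    intro n
    have h : (1:ℝ)/(n+1) ≤ 1 := by
      rw [div_le_one (by positivity)]
      have := Nat.cast_nonneg (α := ℝ) n; linarith
    linarith
  have hr1 : ∀ n : ℕ, (1 - 1/(n+1) : ℝ) ≤ 1 := by
    intro n
    have : (0:ℝ) < 1/(n+1) := by positivity
    linarith
  have hball : ∀ z ∈ Metric.ball (0:ℂ) 1, ‖z‖ < 1 := fun z hz => by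
    simpa [mem_ball_zero_iff] using hz
  have hre1 : ∀ z : ℂ, ‖z‖ < 1 → 0 < (1 - z).re := by
    intro z hz; simpa using aux_re_pos hz zero_le_one le_rfl
  -- bound for g n z
  have hgb : ∀ (n : ℕ) (z : ℂ), ‖z‖ < 1 →
      ‖(1 - z) ^ δ * (1 - (((1 - 1/(n+1) : ℝ)):ℂ) * z) ^ (-δ)‖ ≤ C := by
    intro n z hz
    have h1 := hre1 z hz
    have h2 : 0 < (1 - (((1 - 1/(n+1) : ℝ)):ℂ) * z).re := aux_re_pos hz (hr0 n) (hr1 n)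
    exact aux_abs_cpow_mul_le δ hδ (aux_ne_zero h1) (aux_ne_zero h2) h1.le h2.le
      (aux_abs_le hz (hr0 n) (hr1 n))
  -- bound for (1 - z) ^ δ
  have hfb : ∀ z : ℂ, ‖z‖ < 1 → ‖(1 - z) ^ δ‖ ≤ C := by
    intro z hz
    have h1 := hre1 z hz
    have hab : ‖1 - z‖ ≤ 2 * ‖(1:ℂ)‖ := by
      rw [norm_one, mul_one, sub_eq_add_neg]
      refine le_trans (norm_add_le _ _) ?_
      simp only [norm_one, norm_neg]
      linarith
    have h := aux_abs_cpow_mul_le δ hδ (aux_ne_zero h1) one_ne_zero h1.le (by simp) hab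
    simpa [Complex.one_cpow] using h
  -- weight facts
  have hw0 : ∀ z : ℂ, ‖z‖ < 1 → (0:ℝ) ≤ (1 - ‖z‖ ^ 2) ^ (m-1) := by
    intro z hz; apply pow_nonneg; nlinarith [norm_nonneg z]
  have hw1 : ∀ z : ℂ, ‖z‖ < 1 → (1 - ‖z‖ ^ 2) ^ (m-1) ≤ 1 := by
    intro z hz
    apply pow_le_one₀ (by nlinarith [norm_nonneg z]) (by nlinarith [norm_nonneg z])
  have habs1 : ∀ (a : ℂ), ‖a‖ ≤ C → ‖a - 1‖ ≤ C + 1 := by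
    intro a ha
    calc ‖a - 1‖ = ‖a + (-1)‖ := by rw [sub_eq_add_neg]
      _ ≤ ‖a‖ + ‖-1‖ := norm_add_le _ _
      _ ≤ C + 1 := by simp only [norm_neg, norm_one]; linarith
  -- continuity of the integrands
  have hwcont : Continuous (fun z : ℂ => (1 - ‖z‖ ^ 2) ^ (m-1)) := by
    exact (continuous_const.sub (continuous_norm.pow 2)).pow _
  have hcontF : ∀ n : ℕ, ContinuousOn (fun z : ℂ =>
      ‖(1 - z) ^ δ * (1 - (((1 - 1/(n+1) : ℝ)):ℂ) * z) ^ (-δ) - 1‖ ^ 2 *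
        (1 - ‖z‖ ^ 2) ^ (m-1)) (Metric.ball (0:ℂ) 1) := by
    intro n
    have hg : ContinuousOn (fun z : ℂ =>
        (1 - z) ^ δ * (1 - (((1 - 1/(n+1) : ℝ)):ℂ) * z) ^ (-δ)) (Metric.ball (0:ℂ) 1) :=
      (aux_cont2 δ).mul (aux_cont1 (-δ) (hr0 n) (hr1 n))
    exact ((continuous_norm.comp_continuousOn (hg.sub continuousOn_const)).pow 2).mul
      hwcont.continuousOn
  have hmeas : ∀ n : ℕ, AEStronglyMeasurable (fun z : ℂ =>
      ‖(1 - z) ^ δ * (1 - (((1 - 1/(n+1) : ℝ)):ℂ) * z) ^ (-δ) - 1‖ ^ 2 *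
        (1 - ‖z‖ ^ 2) ^ (m-1)) (volume.restrict (Metric.ball (0:ℂ) 1)) :=
    fun n => (hcontF n).aestronglyMeasurable measurableSet_ball
  have hIc : Integrable (fun _ : ℂ => ((C+1)^2 : ℝ)) (volume.restrict (Metric.ball (0:ℂ) 1)) :=
    integrableOn_const measure_ball_lt_top.ne
  have hFb : ∀ n : ℕ, ∀ᵐ z ∂(volume.restrict (Metric.ball (0:ℂ) 1)),
      ‖‖(1 - z) ^ δ * (1 - (((1 - 1/(n+1) : ℝ)):ℂ) * z) ^ (-δ) - 1‖ ^ 2 *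
        (1 - ‖z‖ ^ 2) ^ (m-1)‖ ≤ (C+1)^2 := by
    intro n
    filter_upwards [ae_restrict_mem measurableSet_ball] with z hz
    have hz' := hball z hz
    have h1 : ‖(1 - z) ^ δ * (1 - (((1 - 1/(n+1) : ℝ)):ℂ) * z) ^ (-δ) - 1‖ ≤ C + 1 :=
      habs1 _ (hgb n z hz')
    rw [Real.norm_eq_abs, _root_.abs_of_nonneg (mul_nonneg (pow_nonneg (norm_nonneg _) _) (hw0 z hz'))]
    calc ‖(1 - z) ^ δ * (1 - (((1 - 1/(n+1) : ℝ)):ℂ) * z) ^ (-δ) - 1‖ ^ 2 *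
          (1 - ‖z‖ ^ 2) ^ (m-1)
        ≤ (C+1)^2 * 1 := by
          apply mul_le_mul _ (hw1 z hz') (hw0 z hz') (by positivity)
          exact pow_le_pow_left₀ (norm_nonneg _) h1 2
      _ = (C+1)^2 := mul_one _
  have hFlim : ∀ᵐ z ∂(volume.restrict (Metric.ball (0:ℂ) 1)),
      Tendsto (fun n : ℕ =>
        ‖(1 - z) ^ δ * (1 - (((1 - 1/(n+1) : ℝ)):ℂ) * z) ^ (-δ) - 1‖ ^ 2 *
          (1 - ‖z‖ ^ 2) ^ (m-1)) atTop (𝓝 0) := by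
    filter_upwards [ae_restrict_mem measurableSet_ball] with z hz
    have hz' := hball z hz
    have h1 := aux_tendsto δ hz'
    have h2 : Tendsto (fun n : ℕ =>
        ‖(1 - z) ^ δ * (1 - (((1 - 1/(n+1) : ℝ)):ℂ) * z) ^ (-δ) - 1‖) atTop (𝓝 0) := by
      have := (continuous_norm.tendsto _).comp (h1.sub (tendsto_const_nhds (x := (1:ℂ))))
      rw [sub_self, norm_zero] at this
      exact this
    have h3 := ((h2.pow 2).mul_const ((1 - ‖z‖ ^ 2) ^ (m-1)))
    simpa using h3
  have hdct := tendsto_integral_of_dominated_convergence (μ := volume.restrict (Metric.ball (0:ℂ) 1))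
    (F := fun n z => ‖(1 - z) ^ δ * (1 - (((1 - 1/(n+1) : ℝ)):ℂ) * z) ^ (-δ) - 1‖ ^ 2 *
      (1 - ‖z‖ ^ 2) ^ (m-1))
    (f := fun _ => (0:ℝ)) (fun _ => (C+1)^2) hmeas hIc hFb hFlim
  rw [integral_zero] at hdct
  obtain ⟨N, hN⟩ := (hdct.eventually_lt_const (by linarith : (0:ℝ) < ε/4)).exists

  -- Stage 2: fix r = 1 - 1/(N+1) and approximate (1 - r z)^(-δ) by a polynomial
  set rr : ℝ := 1 - 1/((N:ℕ)+1) with hrrdef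
  have hrr0 : 0 ≤ rr := hr0 N
  have hrr1 : rr < 1 := by
    have : (0:ℝ) < 1/((N:ℝ)+1) := by positivity
    rw [hrrdef]; push_cast; linarith
  set R : ℝ := 2/(1+rr) with hRdef
  have hRpos : 0 < R := by rw [hRdef]; positivity
  have hR1 : 1 < R := by rw [hRdef, lt_div_iff₀ (by linarith)]; linarith
  have hdiff : DifferentiableOn ℂ (fun z : ℂ => (1 - (rr:ℂ) * z) ^ (-δ))
      (Metric.closedBall (0:ℂ) R.toNNReal) := by
    intro z hz
    have hzR : ‖z‖ ≤ R := by
      have h := mem_closedBall_zero_iff.1 hz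
      rwa [Real.coe_toNNReal _ hRpos.le] at h
    have hre : 0 < (1 - (rr:ℂ) * z).re := by
      have h1 : ((rr:ℂ) * z).re = rr * z.re := by simp [Complex.mul_re]
      have h2 : rr * z.re ≤ rr * ‖z‖ :=
        mul_le_mul_of_nonneg_left (Complex.re_le_norm z) hrr0
      have h3 : rr * ‖z‖ ≤ rr * R := mul_le_mul_of_nonneg_left hzR hrr0
      have h4 : rr * R < 1 := by
        rw [hRdef, show rr * (2/(1+rr)) = 2*rr/(1+rr) by ring, div_lt_one (by linarith)]
        linarith
      simp only [Complex.sub_re, Complex.one_re, h1]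
      linarith
    have hdz : DifferentiableAt ℂ (fun w : ℂ => 1 - (rr:ℂ) * w) z := by fun_prop
    exact (hdz.cpow (differentiableAt_const _) (Or.inl hre)).differentiableWithinAt
  have hR0' : 0 < R.toNNReal := Real.toNNReal_pos.2 hRpos
  have hps := hdiff.hasFPowerSeriesOnBall hR0'
  set p := cauchyPowerSeries (fun z : ℂ => (1 - (rr:ℂ) * z) ^ (-δ)) 0 R.toNNReal with hpdef
  have huni := hps.tendstoUniformlyOn (r' := 1) (by
    apply ENNReal.coe_lt_coe.2
    rw [← NNReal.coe_lt_coe, Real.coe_toNNReal _ hRpos.le]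
    exact_mod_cast hR1)
  rw [Metric.tendstoUniformlyOn_iff] at huni
  set A : ℝ := (volume (Metric.ball (0:ℂ) 1)).toReal with hAdef
  have hA0 : 0 ≤ A := ENNReal.toReal_nonneg
  set η : ℝ := Real.sqrt (ε/(4*(C^2+1)*(A+1))) with hηdef
  have hη0 : 0 < η := Real.sqrt_pos.2 (by positivity)
  have hη2 : η^2 = ε/(4*(C^2+1)*(A+1)) := Real.sq_sqrt (by positivity)
  obtain ⟨n, hn⟩ := (huni η hη0).exists
  set c : ℕ →₀ ℂ := Finsupp.onFinset (Finset.range n)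
    (fun k => if k ∈ Finset.range n then p.coeff k else 0)
    (fun k hk => by by_contra h; exact hk (if_neg h)) with hcdef
  refine ⟨c, ?_⟩
  have hsum : ∀ z : ℂ, (∑ k ∈ c.support, c k * (1 - z) ^ δ * z ^ k)
      = (1 - z) ^ δ * p.partialSum n z := by
    intro z
    have h1 : (∑ k ∈ c.support, c k * (1 - z) ^ δ * z ^ k)
        = ∑ k ∈ Finset.range n, c k * (1 - z) ^ δ * z ^ k :=
      Finset.sum_subset Finsupp.support_onFinset_subset (fun k _ hk => by
        rw [Finsupp.notMem_support_iff.1 hk, zero_mul, zero_mul])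
    rw [h1, FormalMultilinearSeries.partialSum, Finset.mul_sum]
    apply Finset.sum_congr rfl
    intro k hk
    rw [hcdef, Finsupp.onFinset_apply, if_pos hk,
      FormalMultilinearSeries.apply_eq_pow_smul_coeff, smul_eq_mul]
    ring
  -- pointwise estimate
  have hpt : ∀ z ∈ Metric.ball (0:ℂ) 1,
      ‖(∑ k ∈ c.support, c k * (1 - z) ^ δ * z ^ k) - 1‖ ^ 2 *
          (1 - ‖z‖ ^ 2) ^ (m-1)
        ≤ (2*C^2*η^2) * (1 - ‖z‖ ^ 2) ^ (m-1) +
          2 * (‖(1 - z) ^ δ * (1 - (rr:ℂ) * z) ^ (-δ) - 1‖ ^ 2 *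
            (1 - ‖z‖ ^ 2) ^ (m-1)) := by
    intro z hz
    have hz' := hball z hz
    have e1 : ‖(1 - z) ^ δ‖ ≤ C := hfb z hz'
    have e2 : ‖p.partialSum n z - (1 - (rr:ℂ) * z) ^ (-δ)‖ ≤ η := by
      have h := hn z (by simpa using hz)
      rw [dist_comm, Complex.dist_eq] at h
      simpa [zero_add] using h.le
    have e3 : ‖(∑ k ∈ c.support, c k * (1 - z) ^ δ * z ^ k)
        - (1 - z) ^ δ * (1 - (rr:ℂ) * z) ^ (-δ)‖ ≤ C * η := by
      rw [hsum z, ← mul_sub, norm_mul]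
      exact mul_le_mul e1 e2 (norm_nonneg _) hCpos.le
    have e4 : ‖(∑ k ∈ c.support, c k * (1 - z) ^ δ * z ^ k) - 1‖
        ≤ C * η + ‖(1 - z) ^ δ * (1 - (rr:ℂ) * z) ^ (-δ) - 1‖ := by
      have heq : (∑ k ∈ c.support, c k * (1 - z) ^ δ * z ^ k) - 1
          = ((∑ k ∈ c.support, c k * (1 - z) ^ δ * z ^ k)
              - (1 - z) ^ δ * (1 - (rr:ℂ) * z) ^ (-δ))
            + ((1 - z) ^ δ * (1 - (rr:ℂ) * z) ^ (-δ) - 1) := by ring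
      rw [heq]
      exact le_trans (norm_add_le _ _) (add_le_add_left e3 _)
    have e5 : ‖(∑ k ∈ c.support, c k * (1 - z) ^ δ * z ^ k) - 1‖ ^ 2
        ≤ 2*C^2*η^2 + 2 * ‖(1 - z) ^ δ * (1 - (rr:ℂ) * z) ^ (-δ) - 1‖ ^ 2 := by
      have e4' : ‖(∑ k ∈ c.support, c k * (1 - z) ^ δ * z ^ k) - 1‖ ^ 2
          ≤ (C * η + ‖(1 - z) ^ δ * (1 - (rr:ℂ) * z) ^ (-δ) - 1‖) ^ 2 :=
        pow_le_pow_left₀ (norm_nonneg _) e4 2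
      nlinarith [e4', sq_nonneg (C * η - ‖(1 - z) ^ δ * (1 - (rr:ℂ) * z) ^ (-δ) - 1‖)]
    calc ‖(∑ k ∈ c.support, c k * (1 - z) ^ δ * z ^ k) - 1‖ ^ 2 *
          (1 - ‖z‖ ^ 2) ^ (m-1)
        ≤ (2*C^2*η^2 + 2 * ‖(1 - z) ^ δ * (1 - (rr:ℂ) * z) ^ (-δ) - 1‖ ^ 2) *
            (1 - ‖z‖ ^ 2) ^ (m-1) :=
          mul_le_mul_of_nonneg_right e5 (hw0 z hz')
      _ = _ := by ring
  -- integrability of the dominating function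
  have hIw : Integrable (fun z : ℂ => (1 - ‖z‖ ^ 2) ^ (m-1))
      (volume.restrict (Metric.ball (0:ℂ) 1)) := by
    apply Integrable.mono' (g := fun _ => (1:ℝ))
      (integrableOn_const measure_ball_lt_top.ne)
      (hwcont.aestronglyMeasurable.restrict)
    filter_upwards [ae_restrict_mem measurableSet_ball] with z hz
    rw [Real.norm_eq_abs, _root_.abs_of_nonneg (hw0 z (hball z hz))]
    exact hw1 z (hball z hz)
  have hIF : Integrable (fun z : ℂ =>
      ‖(1 - z) ^ δ * (1 - (rr:ℂ) * z) ^ (-δ) - 1‖ ^ 2 *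
        (1 - ‖z‖ ^ 2) ^ (m-1)) (volume.restrict (Metric.ball (0:ℂ) 1)) :=
    Integrable.mono' hIc (hmeas N) (hFb N)
  have hI1 : Integrable (fun z : ℂ => (2*C^2*η^2) * (1 - ‖z‖ ^ 2) ^ (m-1))
      (volume.restrict (Metric.ball (0:ℂ) 1)) := hIw.const_mul _
  have hI2 : Integrable (fun z : ℂ =>
      2 * (‖(1 - z) ^ δ * (1 - (rr:ℂ) * z) ^ (-δ) - 1‖ ^ 2 *
        (1 - ‖z‖ ^ 2) ^ (m-1))) (volume.restrict (Metric.ball (0:ℂ) 1)) :=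
    hIF.const_mul _
  have hIwle : ∫ z in Metric.ball (0:ℂ) 1, (1 - ‖z‖ ^ 2) ^ (m-1) ≤ A := by
    have h1 : ∫ z in Metric.ball (0:ℂ) 1, (1:ℝ) = A := by
      rw [integral_const]
      simp [hAdef, Measure.restrict_apply_univ, smul_eq_mul, measureReal_def]
    rw [← h1]
    apply integral_mono_of_nonneg
    · filter_upwards [ae_restrict_mem measurableSet_ball] with z hz
      exact hw0 z (hball z hz)
    · exact integrableOn_const measure_ball_lt_top.ne
    · filter_upwards [ae_restrict_mem measurableSet_ball] with z hz
      exact hw1 z (hball z hz)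
  have hIF0 : 0 ≤ ∫ z in Metric.ball (0:ℂ) 1,
      ‖(1 - z) ^ δ * (1 - (rr:ℂ) * z) ^ (-δ) - 1‖ ^ 2 *
        (1 - ‖z‖ ^ 2) ^ (m-1) := by
    apply integral_nonneg_of_ae
    filter_upwards [ae_restrict_mem measurableSet_ball] with z hz
    exact mul_nonneg (pow_nonneg (norm_nonneg _) _) (hw0 z (hball z hz))
  calc ∫ z in Metric.ball (0:ℂ) 1,
        ‖(∑ k ∈ c.support, c k * (1 - z) ^ δ * z ^ k) - 1‖ ^ 2 *
          (1 - ‖z‖ ^ 2) ^ (m - 1)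
      ≤ ∫ z in Metric.ball (0:ℂ) 1,
          ((2*C^2*η^2) * (1 - ‖z‖ ^ 2) ^ (m-1) +
            2 * (‖(1 - z) ^ δ * (1 - (rr:ℂ) * z) ^ (-δ) - 1‖ ^ 2 *
              (1 - ‖z‖ ^ 2) ^ (m-1))) := by
        apply integral_mono_of_nonneg
        · filter_upwards [ae_restrict_mem measurableSet_ball] with z hz
          exact mul_nonneg (pow_nonneg (norm_nonneg _) _) (hw0 z (hball z hz))
        · exact hI1.add hI2
        · filter_upwards [ae_restrict_mem measurableSet_ball] with z hz
          exact hpt z hz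
    _ = (2*C^2*η^2) * (∫ z in Metric.ball (0:ℂ) 1, (1 - ‖z‖ ^ 2) ^ (m-1)) +
        2 * ∫ z in Metric.ball (0:ℂ) 1,
          ‖(1 - z) ^ δ * (1 - (rr:ℂ) * z) ^ (-δ) - 1‖ ^ 2 *
            (1 - ‖z‖ ^ 2) ^ (m-1) := by
        rw [integral_add hI1 hI2, integral_const_mul, integral_const_mul]
    _ < (2*C^2*η^2) * A + 2 * (ε/4) := by
        have h1 : (2*C^2*η^2) * (∫ z in Metric.ball (0:ℂ) 1, (1 - ‖z‖ ^ 2) ^ (m-1))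
            ≤ (2*C^2*η^2) * A := mul_le_mul_of_nonneg_left hIwle (by positivity)
        have h2 : 2 * (∫ z in Metric.ball (0:ℂ) 1,
            ‖(1 - z) ^ δ * (1 - (rr:ℂ) * z) ^ (-δ) - 1‖ ^ 2 *
              (1 - ‖z‖ ^ 2) ^ (m-1)) < 2 * (ε/4) := by linarith [hN]
        linarith
    _ ≤ ε := by
        rw [hη2]
        have hd : (0:ℝ) < 4*(C^2+1)*(A+1) := by positivity
        have hte : ε/(4*(C^2+1)*(A+1)) * (4*(C^2+1)*(A+1)) = ε := div_mul_cancel₀ _ hd.ne'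
        have ht0 : 0 ≤ ε/(4*(C^2+1)*(A+1)) := by positivity
        nlinarith [ht0, hA0, sq_nonneg C]
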